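/- Let α > 0, a > 0 and κ > 0. The following are equivalent: (i) there exists a nonzero bounded continuous function ψ : ℝ → ℝ which is twice differentiable at every point x ∉ {−a, a} with ψ''(x) = κ²ψ(x) there, whose derivative ψ' has one-sided limits ψ'(±a+0) and ψ'(±a−0) at both points ±a, and which satisfies the interface conditions ψ'(a+0) − ψ'(a−0) = −αψ(a) and ψ'(−a+0) − ψ'(−a−0) = −αψ(−a); (ii) (α²/4)·exp(−4κa) = (κ − α/2)². -/

import Mathlib

open Filter Topology


private lemma expbase_hasDerivAt (κ p q x : ℝ) :
    HasDerivAt (fun y => p * Real.exp (κ*y) + q * Real.exp (-(κ*y)))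
      (κ*p * Real.exp (κ*x) - κ*q * Real.exp (-(κ*x))) x := by
  have h0 : HasDerivAt (fun y : ℝ => κ * y) κ x := by
    simpa using (hasDerivAt_id x).const_mul κ
  have h1 : HasDerivAt (fun y => Real.exp (κ*y)) (Real.exp (κ*x) * κ) x := h0.exp
  have h0n : HasDerivAt (fun y : ℝ => -(κ * y)) (-κ) x := h0.neg
  have h2 : HasDerivAt (fun y => Real.exp (-(κ*y))) (Real.exp (-(κ*x)) * (-κ)) x := h0n.exp
  have := (h1.const_mul p).add (h2.const_mul q)
  rw [show κ*p * Real.exp (κ*x) - κ*q * Real.exp (-(κ*x))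
    = p * (Real.exp (κ*x) * κ) + q * (Real.exp (-(κ*x)) * (-κ)) by ring]
  exact this

private lemma const_of_hasDerivAt_zero {S : Set ℝ} (hconv : Convex ℝ S) (hopen : IsOpen S)
    {f : ℝ → ℝ} (hf : ∀ x ∈ S, HasDerivAt f 0 x) {x y : ℝ} (hx : x ∈ S) (hy : y ∈ S) :
    f x = f y := by
  refine hconv.is_const_of_fderivWithin_eq_zero (𝕜 := ℝ)
    (fun z hz => ((hf z hz).differentiableAt).differentiableWithinAt) (fun z hz => ?_) hx hy
  rw [fderivWithin_of_isOpen hopen hz, (hf z hz).hasFDerivAt.fderiv]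
  ext
  simp

/-- Solutions of ψ'' = κ²ψ on a convex open set are exponential combinations. -/
private lemma sol_form {κ : ℝ} (hκ : 0 < κ) (ψ : ℝ → ℝ) {S : Set ℝ}
    (hconv : Convex ℝ S) (hopen : IsOpen S)
    (hODE : ∀ x ∈ S, DifferentiableAt ℝ ψ x ∧ DifferentiableAt ℝ (deriv ψ) x ∧
      deriv (deriv ψ) x = κ^2 * ψ x) :
    ∃ P Q : ℝ, ∀ x ∈ S, ψ x = P * Real.exp (κ*x) + Q * Real.exp (-(κ*x)) ∧
      deriv ψ x = κ*P * Real.exp (κ*x) - κ*Q * Real.exp (-(κ*x)) := by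
  rcases S.eq_empty_or_nonempty with rfl | ⟨x₀, hx₀⟩
  · exact ⟨0, 0, fun x hx => absurd hx (Set.notMem_empty x)⟩
  set u : ℝ → ℝ := fun x => Real.exp (κ*x) * (κ * ψ x - deriv ψ x) with hu_def
  set w : ℝ → ℝ := fun x => Real.exp (-(κ*x)) * (κ * ψ x + deriv ψ x) with hw_def
  have hκ0 : κ ≠ 0 := ne_of_gt hκ
  have hderivs : ∀ x ∈ S, HasDerivAt ψ (deriv ψ x) x ∧
      HasDerivAt (deriv ψ) (κ^2 * ψ x) x := by
    intro x hx
    obtain ⟨hd1, hd2, hd3⟩ := hODE x hx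
    exact ⟨hd1.hasDerivAt, hd3 ▸ hd2.hasDerivAt⟩
  have hexp : ∀ x : ℝ, HasDerivAt (fun y => Real.exp (κ*y)) (κ * Real.exp (κ*x)) x := by
    intro x
    have h0 : HasDerivAt (fun y : ℝ => κ * y) κ x := by
      simpa using (hasDerivAt_id x).const_mul κ
    simpa [mul_comm] using h0.exp
  have hexpn : ∀ x : ℝ, HasDerivAt (fun y => Real.exp (-(κ*y))) (-κ * Real.exp (-(κ*x))) x := by
    intro x
    have h0 : HasDerivAt (fun y : ℝ => -(κ * y)) (-κ) x := by
      exact (by simpa using (hasDerivAt_id x).const_mul κ : HasDerivAt (fun y : ℝ => κ * y) κ x).neg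
    simpa [mul_comm] using h0.exp
  have hu : ∀ x ∈ S, HasDerivAt u 0 x := by
    intro x hx
    obtain ⟨hψ, hψ'⟩ := hderivs x hx
    have hin : HasDerivAt (fun y => κ * ψ y - deriv ψ y) (κ * deriv ψ x - κ^2 * ψ x) x :=
      (hψ.const_mul κ).sub hψ'
    have := (hexp x).mul hin
    have h0 : κ * Real.exp (κ*x) * (κ * ψ x - deriv ψ x)
        + Real.exp (κ*x) * (κ * deriv ψ x - κ^2 * ψ x) = 0 := by ring
    exact h0 ▸ this
  have hw : ∀ x ∈ S, HasDerivAt w 0 x := by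
    intro x hx
    obtain ⟨hψ, hψ'⟩ := hderivs x hx
    have hin : HasDerivAt (fun y => κ * ψ y + deriv ψ y) (κ * deriv ψ x + κ^2 * ψ x) x :=
      (hψ.const_mul κ).add hψ'
    have := (hexpn x).mul hin
    have h0 : -κ * Real.exp (-(κ*x)) * (κ * ψ x + deriv ψ x)
        + Real.exp (-(κ*x)) * (κ * deriv ψ x + κ^2 * ψ x) = 0 := by ring
    exact h0 ▸ this
  refine ⟨Real.exp (-(κ*x₀)) * (κ * ψ x₀ + deriv ψ x₀) / (2*κ),
    Real.exp (κ*x₀) * (κ * ψ x₀ - deriv ψ x₀) / (2*κ), fun x hx => ?_⟩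
  have h1 : Real.exp (κ*x) * (κ * ψ x - deriv ψ x)
      = Real.exp (κ*x₀) * (κ * ψ x₀ - deriv ψ x₀) :=
    const_of_hasDerivAt_zero hconv hopen hu hx hx₀
  have h2 : Real.exp (-(κ*x)) * (κ * ψ x + deriv ψ x)
      = Real.exp (-(κ*x₀)) * (κ * ψ x₀ + deriv ψ x₀) :=
    const_of_hasDerivAt_zero hconv hopen hw hx hx₀
  have hxx : Real.exp (κ*x) * Real.exp (-(κ*x)) = 1 := by
    rw [← Real.exp_add]; simp
  constructor
  · field_simp
    linear_combination Real.exp (-(κ*x)) * h1 + Real.exp (κ*x) * h2 - 2*κ*ψ x * hxx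
  · field_simp
    linear_combination Real.exp (κ*x) * h2 - Real.exp (-(κ*x)) * h1 - 2*(deriv ψ x) * hxx

private lemma expbase_continuous (κ p q : ℝ) :
    Continuous (fun y => p * Real.exp (κ*y) + q * Real.exp (-(κ*y))) := by fun_prop

private lemma expbase_deriv_continuous (κ p q : ℝ) :
    Continuous (fun y => κ*p * Real.exp (κ*y) - κ*q * Real.exp (-(κ*y))) := by fun_prop

private lemma tendsto_branch {f g : ℝ → ℝ} {S : Set ℝ} {l : Filter ℝ} {c : ℝ}
    (hS : S ∈ l) (hfg : ∀ x ∈ S, f x = g x) (hg : Filter.Tendsto g l (𝓝 c)) :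
    Filter.Tendsto f l (𝓝 c) :=
  hg.congr' (by filter_upwards [hS] with x hx; exact (hfg x hx).symm)

private lemma expbase_hasDerivAt' (κ p q x : ℝ) :
    HasDerivAt (fun y => p * Real.exp (κ*y) + q * Real.exp (-(κ*y)))
      (κ*p * Real.exp (κ*x) - κ*q * Real.exp (-(κ*x))) x := by
  have h0 : HasDerivAt (fun y : ℝ => κ * y) κ x := by
    simpa using (hasDerivAt_id x).const_mul κ
  have h1 : HasDerivAt (fun y => Real.exp (κ*y)) (Real.exp (κ*x) * κ) x := h0.exp
  have h2 : HasDerivAt (fun y => Real.exp (-(κ*y))) (Real.exp (-(κ*x)) * (-κ)) x := h0.neg.exp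
  have := (h1.const_mul p).add (h2.const_mul q)
  rw [show κ*p * Real.exp (κ*x) - κ*q * Real.exp (-(κ*x))
    = p * (Real.exp (κ*x) * κ) + q * (Real.exp (-(κ*x)) * (-κ)) by ring]
  exact this

private lemma expbase_deriv' (κ p q : ℝ) :
    deriv (fun y => p * Real.exp (κ*y) + q * Real.exp (-(κ*y)))
      = fun y => κ*p * Real.exp (κ*y) - κ*q * Real.exp (-(κ*y)) :=
  funext fun x => (expbase_hasDerivAt' κ p q x).deriv

private lemma branch_props {κ p q : ℝ} (ψ : ℝ → ℝ) {U : Set ℝ} (hU : IsOpen U)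
    (heq : ∀ y ∈ U, ψ y = p * Real.exp (κ*y) + q * Real.exp (-(κ*y))) :
    (∀ y ∈ U, deriv ψ y = κ*p * Real.exp (κ*y) - κ*q * Real.exp (-(κ*y))) ∧
    (∀ x ∈ U, DifferentiableAt ℝ ψ x ∧ DifferentiableAt ℝ (deriv ψ) x ∧
      deriv (deriv ψ) x = κ^2 * ψ x) := by
  have hev : ∀ x ∈ U, ψ =ᶠ[𝓝 x] fun y => p * Real.exp (κ*y) + q * Real.exp (-(κ*y)) :=
    fun x hx => eventually_of_mem (hU.mem_nhds hx) heq
  have hder : ∀ y ∈ U, deriv ψ y = κ*p * Real.exp (κ*y) - κ*q * Real.exp (-(κ*y)) := by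
    intro y hy
    rw [(hev y hy).deriv_eq, expbase_deriv' κ p q]
  refine ⟨hder, fun x hx => ?_⟩
  have hd : deriv ψ =ᶠ[𝓝 x] fun y => (κ*p) * Real.exp (κ*y) + (-(κ*q)) * Real.exp (-(κ*y)) := by
    filter_upwards [hU.mem_nhds hx] with y hy
    rw [hder y hy]; ring
  refine ⟨(hev x hx).differentiableAt_iff.mpr (expbase_hasDerivAt' κ p q x).differentiableAt,
    hd.differentiableAt_iff.mpr (expbase_hasDerivAt' κ (κ*p) (-(κ*q)) x).differentiableAt, ?_⟩
  rw [hd.deriv_eq, expbase_deriv' κ (κ*p) (-(κ*q)), heq x hx]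
  ring

private lemma backward_dir
    (α a κ : ℝ) (hα : 0 < α) (ha : 0 < a) (hκ : 0 < κ)
    (h : (α ^ 2 / 4) * Real.exp (-4 * κ * a) = (κ - α / 2) ^ 2) :
    (∃ ψ : ℝ → ℝ,
      ψ ≠ 0 ∧
      Continuous ψ ∧
      (∃ C : ℝ, ∀ x : ℝ, |ψ x| ≤ C) ∧
      (∀ x : ℝ, x ≠ -a → x ≠ a →
        DifferentiableAt ℝ ψ x ∧ DifferentiableAt ℝ (deriv ψ) x ∧
        deriv (deriv ψ) x = κ ^ 2 * ψ x) ∧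
      (∃ Lpa Lma Lpb Lmb : ℝ,
        Tendsto (deriv ψ) (𝓝[>] a) (𝓝 Lpa) ∧
        Tendsto (deriv ψ) (𝓝[<] a) (𝓝 Lma) ∧
        Tendsto (deriv ψ) (𝓝[>] (-a)) (𝓝 Lpb) ∧
        Tendsto (deriv ψ) (𝓝[<] (-a)) (𝓝 Lmb) ∧
        Lpa - Lma = -α * ψ a ∧
        Lpb - Lmb = -α * ψ (-a))) := by
  have hEpos := Real.exp_pos (κ*a)
  have hFpos := Real.exp_pos (-(κ*a))
  set E := Real.exp (κ*a) with hEdef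
  set F := Real.exp (-(κ*a)) with hFdef
  have hEF : E * F = 1 := by rw [hEdef, hFdef, ← Real.exp_add]; simp
  have hFE : F < E := Real.exp_lt_exp.mpr (by nlinarith)
  -- choose the sign ε
  obtain ⟨ε, hor, hεeq⟩ : ∃ ε : ℝ, (ε = 1 ∨ ε = -1) ∧ κ - α/2 = ε * (α/2) * (F*F) := by
    have hF4 : Real.exp (-4*κ*a) = F*F*F*F := by
      rw [hFdef, ← Real.exp_add, ← Real.exp_add, ← Real.exp_add]; ring_nf
    have hz : (κ - α/2 - (α/2)*(F*F)) * (κ - α/2 + (α/2)*(F*F)) = 0 := by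
      linear_combination (-1)*h + (α^2/4)*hF4
    rcases mul_eq_zero.mp hz with h1 | h1
    · exact ⟨1, Or.inl rfl, by linarith⟩
    · exact ⟨-1, Or.inr rfl, by linarith⟩
  have hε2 : ε * ε = 1 := by rcases hor with rfl | rfl <;> norm_num
  have hεle : ε ≤ 1 := by rcases hor with rfl | rfl <;> norm_num
  have hεge : -1 ≤ ε := by rcases hor with rfl | rfl <;> norm_num
  set M := E + ε * F with hMdef
  have hMpos : 0 < M := by
    rw [hMdef]
    nlinarith [mul_nonneg (by linarith : (0:ℝ) ≤ ε + 1) hFpos.le]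
  have hM2E : M ≤ 2*E := by
    rw [hMdef]
    nlinarith [mul_nonneg (by linarith : (0:ℝ) ≤ 1 - ε) hFpos.le]
  -- the key transcendental relation
  have key : 2*κ*E = α*E + ε*α*F := by
    have hFFE : F * F * E = F := by
      rw [mul_assoc, mul_comm F E, hEF, mul_one]
    linear_combination 2*E*hεeq + ε*α*hFFE
  set p1 : ℝ := ε*M*E with hp1def
  set q3 : ℝ := M*E with hq3def
  set ψ : ℝ → ℝ := fun x =>
    if x ≤ -a then p1 * Real.exp (κ*x) + 0 * Real.exp (-(κ*x))
    else if x ≤ a then 1 * Real.exp (κ*x) + ε * Real.exp (-(κ*x))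
    else 0 * Real.exp (κ*x) + q3 * Real.exp (-(κ*x)) with hψdef
  have hma : κ * (-a) = -(κ*a) := by ring
  -- branch identities
  have hbr1 : ∀ y ∈ Set.Iio (-a), ψ y = p1 * Real.exp (κ*y) + 0 * Real.exp (-(κ*y)) := by
    intro y hy
    simp only [hψdef]
    rw [if_pos (le_of_lt hy)]
  have hbr2 : ∀ y ∈ Set.Ioo (-a) a, ψ y = 1 * Real.exp (κ*y) + ε * Real.exp (-(κ*y)) := by
    intro y hy
    simp only [hψdef]
    rw [if_neg (not_le.mpr hy.1), if_pos (le_of_lt hy.2)]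
  have hbr3 : ∀ y ∈ Set.Ioi a, ψ y = 0 * Real.exp (κ*y) + q3 * Real.exp (-(κ*y)) := by
    intro y hy
    simp only [hψdef]
    have hy' : a < y := hy
    rw [if_neg (by push_neg; linarith), if_neg (by push_neg; linarith)]
  -- values at the interface points
  have hval_a : ψ a = E + ε * F := by
    simp only [hψdef]
    rw [if_neg (by push_neg; linarith), if_pos (le_refl a)]
    rw [← hEdef, ← hFdef]; ring
  have hval_b : ψ (-a) = ε * M := by
    simp only [hψdef]
    rw [if_pos (le_refl (-a)), hma, neg_neg, ← hEdef, ← hFdef, hp1def]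
    linear_combination ε*M*hEF
  -- derivative identities on the three branches
  obtain ⟨hd1, hp1_props⟩ := branch_props (κ := κ) ψ isOpen_Iio hbr1
  obtain ⟨hd2, hp2_props⟩ := branch_props (κ := κ) ψ isOpen_Ioo hbr2
  obtain ⟨hd3, hp3_props⟩ := branch_props (κ := κ) ψ isOpen_Ioi hbr3
  refine ⟨ψ, ?_, ?_, ⟨2*E, ?_⟩, ?_, ?_⟩
  -- ψ ≠ 0
  · intro h0
    have := congrFun h0 a
    rw [hval_a] at this
    simp only [Pi.zero_apply] at this
    rw [hMdef] at hMpos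
    linarith
  -- continuity
  · have hc3 : Continuous (fun x => if x ≤ a
        then 1 * Real.exp (κ*x) + ε * Real.exp (-(κ*x))
        else 0 * Real.exp (κ*x) + q3 * Real.exp (-(κ*x))) := by
      refine Continuous.if_le (expbase_continuous κ 1 ε) (expbase_continuous κ 0 q3)
        continuous_id continuous_const ?_
      intro x hx
      rw [hx, ← hEdef, ← hFdef]
      have : q3 * F = M := by rw [hq3def, mul_assoc, hEF, mul_one]
      rw [hMdef] at this
      linarith [this]
    refine Continuous.if_le (expbase_continuous κ p1 0) hc3 continuous_id continuous_const ?_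
    intro x hx
    rw [hx, if_pos (by linarith : -a ≤ a), hma, neg_neg, ← hEdef, ← hFdef]
    have h1 : p1 * F = ε * M := by rw [hp1def, mul_assoc, hEF, mul_one]
    have h2 : (1:ℝ) * F + ε * E = ε * M := by
      rw [hMdef]; linear_combination (-F)*hε2
    linarith [h1, h2]
  -- boundedness
  · intro x
    clear_value ψ p1 q3 M E F
    rcases le_or_gt x (-a) with hx | hx
    · rw [show ψ x = p1 * Real.exp (κ*x) + 0 * Real.exp (-(κ*x)) from by
        simp only [hψdef]; rw [if_pos hx]]
      have he : Real.exp (κ*x) ≤ F := by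
        rw [hFdef]
        refine Real.exp_le_exp.mpr ?_
        have h := mul_le_mul_of_nonneg_left hx hκ.le
        linarith [h]
      have hepos := Real.exp_pos (κ*x)
      have h1 : E * Real.exp (κ*x) ≤ 1 := le_trans
        (mul_le_mul_of_nonneg_left he hEpos.le) (le_of_eq hEF)
      have hMe : M * (E * Real.exp (κ*x)) ≤ M * 1 :=
        mul_le_mul_of_nonneg_left h1 hMpos.le
      have hnn : 0 ≤ M * (E * Real.exp (κ*x)) :=
        (mul_pos hMpos (mul_pos hEpos hepos)).le
      have hveq : p1 * Real.exp (κ*x) + 0 * Real.exp (-(κ*x))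
          = ε * (M * (E * Real.exp (κ*x))) := by rw [hp1def]; ring
      rw [hveq, abs_le]
      have u1 : 0 ≤ (1-ε) * (M * (E * Real.exp (κ*x))) :=
        mul_nonneg (by linarith) hnn
      have u2 : 0 ≤ (1+ε) * (M * (E * Real.exp (κ*x))) :=
        mul_nonneg (by linarith) hnn
      constructor <;> linarith [hMe, hM2E, hnn, hEpos, u1, u2]
    rcases le_or_gt x a with hx2 | hx2
    · rw [show ψ x = 1 * Real.exp (κ*x) + ε * Real.exp (-(κ*x)) from by
        simp only [hψdef]; rw [if_neg (not_le.mpr hx), if_pos hx2]]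
      have he1 : Real.exp (κ*x) ≤ E := by
        rw [hEdef]
        refine Real.exp_le_exp.mpr ?_
        have h := mul_le_mul_of_nonneg_left hx2 hκ.le
        linarith [h]
      have he2 : Real.exp (-(κ*x)) ≤ E := by
        rw [hEdef]
        refine Real.exp_le_exp.mpr ?_
        have h := mul_le_mul_of_nonneg_left (by linarith : -x ≤ a) hκ.le
        linarith [h]
      have p1pos := Real.exp_pos (κ*x)
      have p2pos := Real.exp_pos (-(κ*x))
      rw [abs_le]
      have u1 : 0 ≤ (1-ε) * Real.exp (-(κ*x)) := mul_nonneg (by linarith) p2pos.le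
      have u2 : 0 ≤ (1+ε) * Real.exp (-(κ*x)) := mul_nonneg (by linarith) p2pos.le
      constructor <;> linarith [he1, he2, p1pos, p2pos, u1, u2, hEpos]
    · rw [show ψ x = 0 * Real.exp (κ*x) + q3 * Real.exp (-(κ*x)) from by
        simp only [hψdef]; rw [if_neg (by push_neg; linarith), if_neg (not_le.mpr hx2)]]
      have he : Real.exp (-(κ*x)) ≤ F := by
        rw [hFdef]
        refine Real.exp_le_exp.mpr ?_
        have h := mul_le_mul_of_nonneg_left (by linarith : -x ≤ -a) hκ.le
        linarith [h]
      have hepos := Real.exp_pos (-(κ*x))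
      have h1 : E * Real.exp (-(κ*x)) ≤ 1 := le_trans
        (mul_le_mul_of_nonneg_left he hEpos.le) (le_of_eq hEF)
      have hMe : M * (E * Real.exp (-(κ*x))) ≤ M * 1 :=
        mul_le_mul_of_nonneg_left h1 hMpos.le
      have hnn : 0 ≤ M * (E * Real.exp (-(κ*x))) :=
        (mul_pos hMpos (mul_pos hEpos hepos)).le
      have hveq : 0 * Real.exp (κ*x) + q3 * Real.exp (-(κ*x))
          = M * (E * Real.exp (-(κ*x))) := by rw [hq3def]; ring
      rw [hveq, abs_le]
      constructor <;> linarith [hMe, hM2E, hnn, hEpos]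
  -- ODE away from ±a
  · intro x hx1 hx2
    rcases lt_trichotomy x (-a) with hlt | heq0 | hgt
    · exact hp1_props x hlt
    · exact absurd heq0 hx1
    rcases lt_trichotomy x a with hlt2 | heq2 | hgt2
    · exact hp2_props x ⟨hgt, hlt2⟩
    · exact absurd heq2 hx2
    · exact hp3_props x hgt2
  -- interface jump conditions
  · have hIooa : Set.Ioo (-a) a ∈ 𝓝[<] a := Ioo_mem_nhdsLT_of_mem ⟨by linarith, le_refl a⟩
    have hIoob : Set.Ioo (-a) a ∈ 𝓝[>] (-a) := Ioo_mem_nhdsGT_of_mem ⟨le_refl (-a), by linarith⟩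
    have hIoia : Set.Ioi a ∈ 𝓝[>] a := self_mem_nhdsWithin
    have hIiob : Set.Iio (-a) ∈ 𝓝[<] (-a) := self_mem_nhdsWithin
    refine ⟨κ*0*E - κ*q3*F, κ*1*E - κ*ε*F, κ*1*F - κ*ε*E, κ*p1*F - κ*0*E, ?_, ?_, ?_, ?_, ?_, ?_⟩
    · exact tendsto_branch hIoia hd3
        (((expbase_deriv_continuous κ 0 q3).tendsto a).mono_left nhdsWithin_le_nhds)
    · exact tendsto_branch hIooa hd2
        (((expbase_deriv_continuous κ 1 ε).tendsto a).mono_left nhdsWithin_le_nhds)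
    · have := tendsto_branch hIoob hd2
        (((expbase_deriv_continuous κ 1 ε).tendsto (-a)).mono_left nhdsWithin_le_nhds)
      rw [hma, neg_neg] at this
      exact this
    · have := tendsto_branch hIiob hd1
        (((expbase_deriv_continuous κ p1 0).tendsto (-a)).mono_left nhdsWithin_le_nhds)
      rw [hma, neg_neg] at this
      exact this
    · rw [hval_a]
      have hq3F : q3 * F = M := by rw [hq3def, mul_assoc, hEF, mul_one]
      rw [hMdef] at hq3F
      linear_combination (-κ)*hq3F - key
    · rw [hval_b]
      have hp1F : p1 * F = ε * M := by rw [hp1def, mul_assoc, hEF, mul_one]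
      linear_combination (-κ)*hp1F + (α-κ)*ε*hMdef + (-(κ*F))*hε2 + (-ε)*key
private lemma forward_dir
    (α a κ : ℝ) (hα : 0 < α) (ha : 0 < a) (hκ : 0 < κ)
    (ψ : ℝ → ℝ) (hne : ψ ≠ 0) (hcont : Continuous ψ)
    (C : ℝ) (hC : ∀ x : ℝ, |ψ x| ≤ C)
    (hODE : ∀ x : ℝ, x ≠ -a → x ≠ a →
        DifferentiableAt ℝ ψ x ∧ DifferentiableAt ℝ (deriv ψ) x ∧
        deriv (deriv ψ) x = κ ^ 2 * ψ x)
    (Lpa Lma Lpb Lmb : ℝ)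
    (tpa : Tendsto (deriv ψ) (𝓝[>] a) (𝓝 Lpa))
    (tma : Tendsto (deriv ψ) (𝓝[<] a) (𝓝 Lma))
    (tpb : Tendsto (deriv ψ) (𝓝[>] (-a)) (𝓝 Lpb))
    (tmb : Tendsto (deriv ψ) (𝓝[<] (-a)) (𝓝 Lmb))
    (j1 : Lpa - Lma = -α * ψ a)
    (j2 : Lpb - Lmb = -α * ψ (-a)) :
    (α ^ 2 / 4) * Real.exp (-4 * κ * a) = (κ - α / 2) ^ 2 := by
  have hEpos := Real.exp_pos (κ*a)
  have hFpos := Real.exp_pos (-(κ*a))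
  set E := Real.exp (κ*a) with hEdef
  set F := Real.exp (-(κ*a)) with hFdef
  have hEF : E * F = 1 := by rw [hEdef, hFdef, ← Real.exp_add]; simp
  -- solutions on the three regions
  obtain ⟨A, B, hAB⟩ := sol_form hκ ψ (convex_Ioi a) isOpen_Ioi
    (fun x hx => hODE x (by intro h; rw [h] at hx; exact absurd hx (by simp; linarith))
      (ne_of_gt hx))
  obtain ⟨A', B', hA'B'⟩ := sol_form hκ ψ (convex_Iio (-a)) isOpen_Iio
    (fun x hx => hODE x (ne_of_lt hx)
      (by intro h; rw [h] at hx; exact absurd hx (by simp; linarith)))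
  obtain ⟨P, Q, hPQ⟩ := sol_form hκ ψ (convex_Ioo (-a) a) isOpen_Ioo
    (fun x hx => hODE x (ne_of_gt hx.1) (ne_of_lt hx.2))
  -- exp decay limits
  have hexp0 : Tendsto (fun x : ℝ => Real.exp (-(κ*x))) atTop (𝓝 0) := by
    have h1 : Tendsto (fun x : ℝ => κ * x) atTop atTop := Tendsto.const_mul_atTop hκ tendsto_id
    have h2 : Tendsto (fun x : ℝ => -(κ * x)) atTop atBot := tendsto_neg_atBot_iff.mpr h1
    simpa [Function.comp_def] using Real.tendsto_exp_atBot.comp h2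
  have hexp0' : Tendsto (fun x : ℝ => Real.exp (κ*x)) atBot (𝓝 0) := by
    have h1 : Tendsto (fun x : ℝ => κ * x) atBot atBot := Tendsto.const_mul_atBot hκ tendsto_id
    simpa [Function.comp_def] using Real.tendsto_exp_atBot.comp h1
  -- A = 0
  have hA : A = 0 := by
    have t1 : Tendsto (fun x => ψ x * Real.exp (-(κ*x))) atTop (𝓝 0) := by
      apply squeeze_zero_norm (a := fun x => C * Real.exp (-(κ*x)))
      · intro x
        rw [Real.norm_eq_abs, abs_mul, abs_of_pos (Real.exp_pos _)]
        exact mul_le_mul_of_nonneg_right (hC x) (Real.exp_pos _).le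
      · simpa using hexp0.const_mul C
    have t2 : Tendsto (fun x => B * (Real.exp (-(κ*x)) * Real.exp (-(κ*x)))) atTop (𝓝 0) := by
      simpa using (hexp0.mul hexp0).const_mul B
    have t3 : Tendsto (fun x => ψ x * Real.exp (-(κ*x))
        - B * (Real.exp (-(κ*x)) * Real.exp (-(κ*x)))) atTop (𝓝 0) := by
      simpa using t1.sub t2
    have heq : (fun x => ψ x * Real.exp (-(κ*x))
        - B * (Real.exp (-(κ*x)) * Real.exp (-(κ*x)))) =ᶠ[atTop] fun _ => A := by
      filter_upwards [eventually_gt_atTop a] with x hx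
      have hxx : Real.exp (κ*x) * Real.exp (-(κ*x)) = 1 := by rw [← Real.exp_add]; simp
      rw [(hAB x hx).1]
      linear_combination A * hxx
    exact (tendsto_nhds_unique (t3.congr' heq) tendsto_const_nhds).symm
  -- B' = 0
  have hB' : B' = 0 := by
    have t1 : Tendsto (fun x => ψ x * Real.exp (κ*x)) atBot (𝓝 0) := by
      apply squeeze_zero_norm (a := fun x => C * Real.exp (κ*x))
      · intro x
        rw [Real.norm_eq_abs, abs_mul, abs_of_pos (Real.exp_pos _)]
        exact mul_le_mul_of_nonneg_right (hC x) (Real.exp_pos _).le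
      · simpa using hexp0'.const_mul C
    have t2 : Tendsto (fun x => A' * (Real.exp (κ*x) * Real.exp (κ*x))) atBot (𝓝 0) := by
      simpa using (hexp0'.mul hexp0').const_mul A'
    have t3 : Tendsto (fun x => ψ x * Real.exp (κ*x)
        - A' * (Real.exp (κ*x) * Real.exp (κ*x))) atBot (𝓝 0) := by
      simpa using t1.sub t2
    have heq : (fun x => ψ x * Real.exp (κ*x)
        - A' * (Real.exp (κ*x) * Real.exp (κ*x))) =ᶠ[atBot] fun _ => B' := by
      filter_upwards [eventually_lt_atBot (-a)] with x hx
      have hxx : Real.exp (κ*x) * Real.exp (-(κ*x)) = 1 := by rw [← Real.exp_add]; simp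
      rw [(hA'B' x hx).1]
      linear_combination B' * hxx
    exact (tendsto_nhds_unique (t3.congr' heq) tendsto_const_nhds).symm
  -- membership facts
  have hIooa : Set.Ioo (-a) a ∈ 𝓝[<] a := Ioo_mem_nhdsLT_of_mem ⟨by linarith, le_refl a⟩
  have hIoob : Set.Ioo (-a) a ∈ 𝓝[>] (-a) := Ioo_mem_nhdsGT_of_mem ⟨le_refl (-a), by linarith⟩
  have hIoia : Set.Ioi a ∈ 𝓝[>] a := self_mem_nhdsWithin
  have hIiob : Set.Iio (-a) ∈ 𝓝[<] (-a) := self_mem_nhdsWithin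
  have hma : κ * (-a) = -(κ*a) := by ring
  have hma' : -(κ * (-a)) = κ*a := by ring
  -- values of ψ at ±a from each side
  have hpsia1 : ψ a = A * E + B * F := by
    refine tendsto_nhds_unique ((hcont.tendsto a).mono_left nhdsWithin_le_nhds)
      (tendsto_branch hIoia (fun x hx => (hAB x hx).1) ?_)
    exact ((expbase_continuous κ A B).tendsto a).mono_left nhdsWithin_le_nhds
  have hpsia2 : ψ a = P * E + Q * F := by
    refine tendsto_nhds_unique ((hcont.tendsto a).mono_left nhdsWithin_le_nhds)
      (tendsto_branch hIooa (fun x hx => (hPQ x hx).1) ?_)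
    exact ((expbase_continuous κ P Q).tendsto a).mono_left nhdsWithin_le_nhds
  have hpsib1 : ψ (-a) = A' * F + B' * E := by
    have := tendsto_nhds_unique ((hcont.tendsto (-a)).mono_left nhdsWithin_le_nhds)
      (tendsto_branch hIiob (fun x hx => (hA'B' x hx).1)
        (((expbase_continuous κ A' B').tendsto (-a)).mono_left nhdsWithin_le_nhds))
    rw [this, hma, neg_neg]
  have hpsib2 : ψ (-a) = P * F + Q * E := by
    have := tendsto_nhds_unique ((hcont.tendsto (-a)).mono_left nhdsWithin_le_nhds)
      (tendsto_branch hIoob (fun x hx => (hPQ x hx).1)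
        (((expbase_continuous κ P Q).tendsto (-a)).mono_left nhdsWithin_le_nhds))
    rw [this, hma, neg_neg]
  -- one-sided derivative limits
  have hLpa : Lpa = κ*A*E - κ*B*F :=
    tendsto_nhds_unique tpa (tendsto_branch hIoia (fun x hx => (hAB x hx).2)
      (((expbase_deriv_continuous κ A B).tendsto a).mono_left nhdsWithin_le_nhds))
  have hLma : Lma = κ*P*E - κ*Q*F :=
    tendsto_nhds_unique tma (tendsto_branch hIooa (fun x hx => (hPQ x hx).2)
      (((expbase_deriv_continuous κ P Q).tendsto a).mono_left nhdsWithin_le_nhds))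
  have hLpb : Lpb = κ*P*F - κ*Q*E := by
    have := tendsto_nhds_unique tpb (tendsto_branch hIoob (fun x hx => (hPQ x hx).2)
      (((expbase_deriv_continuous κ P Q).tendsto (-a)).mono_left nhdsWithin_le_nhds))
    rw [this, hma, neg_neg]
  have hLmb : Lmb = κ*A'*F - κ*B'*E := by
    have := tendsto_nhds_unique tmb (tendsto_branch hIiob (fun x hx => (hA'B' x hx).2)
      (((expbase_deriv_continuous κ A' B').tendsto (-a)).mono_left nhdsWithin_le_nhds))
    rw [this, hma, neg_neg]
  -- the two matching equations
  rw [hLpa, hLma, hpsia1] at j1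
  rw [hLpb, hLmb, hpsib2] at j2
  have hBF : B * F = P*E + Q*F := by
    rw [hA] at hpsia1
    linear_combination hpsia2 - hpsia1
  have hAF : A' * F = P*F + Q*E := by
    rw [hB'] at hpsib1
    linear_combination hpsib2 - hpsib1
  have eq1 : 2*κ*P*E = α*(P*E + Q*F) := by
    linear_combination (-1)*j1 + (κ*E + α*E)*hA + (α - κ)*hBF
  have eq2 : 2*κ*Q*E = α*(Q*E + P*F) := by
    linear_combination (-1)*j2 + (κ*E)*hB' + (-κ)*hAF
  -- nontriviality: not both P and Q vanish
  have hPQne : ¬ (P = 0 ∧ Q = 0) := by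
    rintro ⟨hP, hQ⟩
    apply hne
    have hψa : ψ a = 0 := by rw [hpsia2, hP, hQ]; ring
    have hψb : ψ (-a) = 0 := by rw [hpsib2, hP, hQ]; ring
    have hB0 : B = 0 := by
      have h0 : B * F = 0 := by linear_combination hBF + E*hP + F*hQ
      exact (mul_eq_zero.mp h0).resolve_right (ne_of_gt hFpos)
    have hA'0 : A' = 0 := by
      have h0 : A' * F = 0 := by linear_combination hAF + F*hP + E*hQ
      exact (mul_eq_zero.mp h0).resolve_right (ne_of_gt hFpos)
    funext x
    simp only [Pi.zero_apply]
    rcases lt_trichotomy x (-a) with h | h | h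
    · rw [(hA'B' x h).1, hA'0, hB']; ring
    · rw [h, hψb]
    rcases lt_trichotomy x a with h2 | h2 | h2
    · rw [(hPQ x ⟨h, h2⟩).1, hP, hQ]; ring
    · rw [h2, hψa]
    · rw [(hAB x h2).1, hA, hB0]; ring
  -- P ≠ 0 and Q ≠ 0
  have hP : P ≠ 0 := by
    intro hP
    apply hPQne
    refine ⟨hP, ?_⟩
    rw [hP] at eq1
    have : α * (Q * F) = 0 := by linarith [eq1]
    have := (mul_eq_zero.mp this).resolve_left (ne_of_gt hα)
    exact (mul_eq_zero.mp this).resolve_right (ne_of_gt hFpos)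
  have hQ : Q ≠ 0 := by
    intro hQ
    apply hPQne
    refine ⟨?_, hQ⟩
    rw [hQ] at eq2
    have : α * (P * F) = 0 := by linarith [eq2]
    have := (mul_eq_zero.mp this).resolve_left (ne_of_gt hα)
    exact (mul_eq_zero.mp this).resolve_right (ne_of_gt hFpos)
  -- conclude
  have eq1' : (2*κ - α) * P * E = α * Q * F := by linarith [eq1]
  have eq2' : (2*κ - α) * Q * E = α * P * F := by linarith [eq2]
  have hprod : (P*Q) * ((2*κ-α)^2 * E^2) = (P*Q) * (α^2 * F^2) := by
    linear_combination ((2*κ-α)*P*E) * eq2' + (α*P*F) * eq1'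
  have hmain : (2*κ-α)^2 * E^2 = α^2 * F^2 :=
    mul_left_cancel₀ (mul_ne_zero hP hQ) hprod
  have hF4 : Real.exp (-4*κ*a) = F*F*F*F := by
    rw [hFdef, ← Real.exp_add, ← Real.exp_add, ← Real.exp_add]; ring_nf
  have hmain2 : (2*κ-α)^2 = α^2 * (F*F*F*F) := by
    linear_combination F^2 * hmain - (2*κ-α)^2*(E*F+1)*hEF
  rw [hF4]
  linear_combination (-1/4) * hmain2


/-- `−κ²` is an eigenvalue of the one-dimensional Schrödinger
operator with two attractive delta interactions of strength `α` at `±a`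
if and only if `(α²/4)·exp(−4κa) = (κ − α/2)²`. -/
theorem delta_eigenvalue_characterization
    (α a κ : ℝ) (hα : 0 < α) (ha : 0 < a) (hκ : 0 < κ) :
    (∃ ψ : ℝ → ℝ,
      ψ ≠ 0 ∧
      Continuous ψ ∧
      (∃ C : ℝ, ∀ x : ℝ, |ψ x| ≤ C) ∧
      (∀ x : ℝ, x ≠ -a → x ≠ a →
        DifferentiableAt ℝ ψ x ∧ DifferentiableAt ℝ (deriv ψ) x ∧
        deriv (deriv ψ) x = κ ^ 2 * ψ x) ∧
      (∃ Lpa Lma Lpb Lmb : ℝ,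
        Tendsto (deriv ψ) (𝓝[>] a) (𝓝 Lpa) ∧
        Tendsto (deriv ψ) (𝓝[<] a) (𝓝 Lma) ∧
        Tendsto (deriv ψ) (𝓝[>] (-a)) (𝓝 Lpb) ∧
        Tendsto (deriv ψ) (𝓝[<] (-a)) (𝓝 Lmb) ∧
        Lpa - Lma = -α * ψ a ∧
        Lpb - Lmb = -α * ψ (-a)))
    ↔ (α ^ 2 / 4) * Real.exp (-4 * κ * a) = (κ - α / 2) ^ 2 := by
  constructor
  · rintro ⟨ψ, hne, hcont, ⟨C, hC⟩, hODE, Lpa, Lma, Lpb, Lmb,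
      tpa, tma, tpb, tmb, j1, j2⟩
    exact forward_dir α a κ hα ha hκ ψ hne hcont C hC hODE Lpa Lma Lpb Lmb
      tpa tma tpb tmb j1 j2
  · exact backward_dir α a κ hα ha hκ
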